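/- Under the refinement T-Refine, if ℒ is the set of eligible literals of a guarded clause or a loosely guarded clause C, then the variables occurring in ℒ are exactly the variables of C, i.e., Var(ℒ) = Var(C). -/

import Mathlib

/-!
Common formalization of first-order clausal logic (without equality), following
"Resolution-based query answering and rewriting for the (loosely) guarded fragment".
-/

set_option linter.unusedVariables false

namespace QGF

/-- Symbols: function symbols, constant symbols and predicate symbols, each indexed by ℕ. -/
inductive Head : Type
  | fn : ℕ → Head
  | cn : ℕ → Head
  | pr : ℕ → Head
  deriving DecidableEq

/-- First-order terms.  A constant `c` is represented as `Term.app (Head.cn c) []`. -/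
inductive Term : Type
  | var : ℕ → Term
  | app : Head → List Term → Term

namespace Term

def isVar : Term → Prop
  | var _ => True
  | _ => False

def isConst : Term → Prop
  | app (.cn _) [] => True
  | _ => False

/-- A compound term is a term that is neither a variable nor a constant. -/
def isCompound (t : Term) : Prop := ¬ t.isVar ∧ ¬ t.isConst

/-- Occurrence of a variable in a term. -/
inductive HasVar : Term → ℕ → Prop
  | var (x : ℕ) : HasVar (var x) x
  | app {h : Head} {ts : List Term} {x : ℕ} {t : Term} :
      t ∈ ts → HasVar t x → HasVar (app h ts) x

def vars (t : Term) : Set ℕ := {x | t.HasVar x}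

/-- Subterm relation. -/
inductive SubtermOf : Term → Term → Prop
  | refl (t : Term) : SubtermOf t t
  | app {s : Term} {h : Head} {ts : List Term} {t : Term} :
      t ∈ ts → SubtermOf s t → SubtermOf s (app h ts)

/-- Depth of a term: variables and constants have depth 0. -/
def depth : Term → ℕ
  | var _ => 0
  | app _ ts => (ts.attach.map fun t => depth t.1 + 1).foldr max 0
  decreasing_by
    have := List.sizeOf_lt_of_mem t.2
    simp only [Term.app.sizeOf_spec]
    omega

/-- Applying a substitution to a term. -/
def subst (σ : ℕ → Term) : Term → Term
  | var x => σ x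
  | app h ts => app h (ts.attach.map fun t => subst σ t.1)
  decreasing_by
    have := List.sizeOf_lt_of_mem t.2
    simp only [Term.app.sizeOf_spec]
    omega

def isGround (t : Term) : Prop := t.vars = ∅

/-- An argument is flat if it is a variable or a constant. -/
def flatArg (t : Term) : Prop := t.isVar ∨ t.isConst

/-- An argument is simple if it is a variable, a constant, or a compound term all of
whose arguments are variables or constants. -/
def simpleArg : Term → Prop
  | var _ => True
  | app _ ts => ∀ u ∈ ts, flatArg u

end Term

/-- Substitutions. -/
abbrev Subst := ℕ → Term

/-- Atoms. -/
structure Atom where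
  pred : ℕ
  args : List Term

namespace Atom

def subst (σ : Subst) (a : Atom) : Atom := ⟨a.pred, a.args.map (Term.subst σ)⟩

def vars (a : Atom) : Set ℕ := {x | ∃ t ∈ a.args, x ∈ t.vars}

def flat (a : Atom) : Prop := ∀ t ∈ a.args, t.flatArg

def simple (a : Atom) : Prop := ∀ t ∈ a.args, t.simpleArg

def ground (a : Atom) : Prop := a.vars = ∅

/-- An atom `P(t₁,…,tₙ)` viewed as the term with head the predicate symbol `P`. -/
def toTerm (a : Atom) : Term := .app (.pr a.pred) a.args

end Atom

/-- Literals. -/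
structure Lit where
  pos : Bool
  atom : Atom

def Lit.mkPos (a : Atom) : Lit := ⟨true, a⟩
def Lit.mkNeg (a : Atom) : Lit := ⟨false, a⟩

namespace Lit

def subst (σ : Subst) (L : Lit) : Lit := ⟨L.pos, L.atom.subst σ⟩

def vars (L : Lit) : Set ℕ := L.atom.vars

def ground (L : Lit) : Prop := L.vars = ∅

def flat (L : Lit) : Prop := L.atom.flat

def simple (L : Lit) : Prop := L.atom.simple

/-- Occurrence of a term in a literal (as a subterm of an argument). -/
def hasTerm (L : Lit) (t : Term) : Prop := ∃ u ∈ L.atom.args, t.SubtermOf u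

def hasCompound (L : Lit) : Prop := ∃ t, L.hasTerm t ∧ t.isCompound

/-- A literal is covering if every compound term occurring in it contains exactly the
variables of the literal. -/
def covering (L : Lit) : Prop := ∀ t, L.hasTerm t → t.isCompound → t.vars = L.vars

end Lit

/-- A clause is a (multi)set of literals, represented as a list, read disjunctively,
with all variables implicitly universally quantified. -/
abbrev Clause := List Lit

namespace Clause

def subst (σ : Subst) (C : Clause) : Clause := C.map (Lit.subst σ)

def vars (C : Clause) : Set ℕ := {x | ∃ L ∈ C, x ∈ L.vars}

def ground (C : Clause) : Prop := vars C = ∅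

def flat (C : Clause) : Prop := ∀ L ∈ C, L.flat

def simple (C : Clause) : Prop := ∀ L ∈ C, L.simple

def hasTerm (C : Clause) (t : Term) : Prop := ∃ L ∈ C, L.hasTerm t

/-- A clause is covering if every compound term occurring in it contains exactly the
variables of the clause. -/
def covering (C : Clause) : Prop := ∀ t, hasTerm C t → t.isCompound → t.vars = vars C

def hasNegCompound (C : Clause) : Prop := ∃ L ∈ C, L.pos = false ∧ L.hasCompound

def hasCompound (C : Clause) : Prop := ∃ L ∈ C, L.hasCompound

/-- The predicate symbols occurring in a clause. -/
def preds (C : Clause) : Set ℕ := {p | ∃ L ∈ C, L.atom.pred = p}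

/-- The depth of a clause: the maximal depth of a term occurring in it. -/
def depth (C : Clause) : ℕ :=
  (C.map fun L => (L.atom.args.map Term.depth).foldr max 0).foldr max 0

end Clause

/-- `L` is a guard of `C`:  a negative flat literal of `C` containing all variables of `C`. -/
def Lit.isGuardOf (L : Lit) (C : Clause) : Prop :=
  L ∈ C ∧ L.pos = false ∧ L.flat ∧ L.vars = Clause.vars C

/-- Guarded clauses (Definition 3.3). -/
def Clause.guarded (C : Clause) : Prop :=
  Clause.simple C ∧ Clause.covering C ∧ (Clause.ground C ∨ ∃ L : Lit, L.isGuardOf C)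

/-- `G` is a set of loose guards of `C`. -/
def Clause.looseGuardsOf (G : List Lit) (C : Clause) : Prop :=
  (∀ L ∈ G, L ∈ C ∧ L.pos = false ∧ L.flat) ∧
  (∀ x ∈ Clause.vars C, ∃ L ∈ G, x ∈ L.vars) ∧
  (∀ x ∈ Clause.vars C, ∀ y ∈ Clause.vars C, x ≠ y → ∃ L ∈ G, x ∈ L.vars ∧ y ∈ L.vars)

/-- Loosely guarded clauses (Definition 3.3). -/
def Clause.looselyGuarded (C : Clause) : Prop :=
  Clause.simple C ∧ Clause.covering C ∧
    (Clause.ground C ∨ ∃ G : List Lit, Clause.looseGuardsOf G C)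

/-- Query clauses: flat clauses containing only negative literals (Definition 3.2). -/
def Clause.query (C : Clause) : Prop := Clause.flat C ∧ ∀ L ∈ C, L.pos = false

/-! ### Semantics -/

/-- First-order interpretations. -/
structure Interp : Type 1 where
  dom : Type
  nonempty : Nonempty dom
  fn : Head → List dom → dom
  pr : ℕ → List dom → Prop

def Term.eval (I : Interp) (ν : ℕ → I.dom) : Term → I.dom
  | .var x => ν x
  | .app h ts => I.fn h (ts.attach.map fun t => Term.eval I ν t.1)
  decreasing_by
    have := List.sizeOf_lt_of_mem t.2
    simp only [Term.app.sizeOf_spec]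
    omega

def Atom.holds (I : Interp) (ν : ℕ → I.dom) (a : Atom) : Prop :=
  I.pr a.pred (a.args.map (Term.eval I ν))

def Lit.holds (I : Interp) (ν : ℕ → I.dom) (L : Lit) : Prop :=
  if L.pos then L.atom.holds I ν else ¬ L.atom.holds I ν

/-- A clause holds under a valuation if one of its literals does. -/
def Clause.holdsUnder (I : Interp) (ν : ℕ → I.dom) (C : Clause) : Prop :=
  ∃ L ∈ C, L.holds I ν

/-- A clause is true in an interpretation if its universal closure holds. -/
def Clause.trueIn (I : Interp) (C : Clause) : Prop := ∀ ν, Clause.holdsUnder I ν C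

def Interp.models (I : Interp) (N : Set Clause) : Prop := ∀ C ∈ N, Clause.trueIn I C

/-- Satisfiability of a set of clauses. -/
def satisfiable (N : Set Clause) : Prop := ∃ I : Interp, I.models N

/-- Logical consequence:  every model of `N` is a model of `C`. -/
def entails (N : Set Clause) (C : Clause) : Prop :=
  ∀ I : Interp, I.models N → Clause.trueIn I C

/-- A tautology is a clause true in every interpretation. -/
def Tautology (C : Clause) : Prop := ∀ (I : Interp) (ν : ℕ → I.dom), Clause.holdsUnder I ν C

/-- Two clauses are variants if each is an instance of the other. -/
def Variant (C D : Clause) : Prop :=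
  (∃ σ : Subst, Clause.subst σ C = D) ∧ (∃ ρ : Subst, Clause.subst ρ D = C)

/-! ### Unification -/

def Unifies (σ : Subst) (a b : Atom) : Prop := a.subst σ = b.subst σ

/-- Most general unifiers. -/
def IsMGU (σ : Subst) (a b : Atom) : Prop :=
  Unifies σ a b ∧ ∀ θ : Subst, Unifies θ a b → ∃ ρ : Subst, ∀ x, (σ x).subst ρ = θ x

def Lit.unifies (σ : Subst) (L1 L2 : Lit) : Prop := L1.subst σ = L2.subst σ

def Lit.isMGU (σ : Subst) (L1 L2 : Lit) : Prop :=
  Lit.unifies σ L1 L2 ∧ ∀ θ : Subst, Lit.unifies θ L1 L2 → ∃ ρ : Subst, ∀ x, (σ x).subst ρ = θ x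

def UnifiesAll (σ : Subst) (ps : List (Atom × Atom)) : Prop :=
  ∀ p ∈ ps, Atom.subst σ p.1 = Atom.subst σ p.2

/-- Simultaneous most general unifiers. -/
def IsSimMGU (σ : Subst) (ps : List (Atom × Atom)) : Prop :=
  UnifiesAll σ ps ∧ ∀ θ : Subst, UnifiesAll θ ps → ∃ ρ : Subst, ∀ x, (σ x).subst ρ = θ x

/-! ### Condensation, separability -/

/-- `D` is a subclause of `C` (as multisets). -/
def SubClause (D C : Clause) : Prop := (↑D : Multiset Lit) ≤ (↑C : Multiset Lit)

/-- `D` is a condensation of `C`: a proper subclause of `C` which is an instance of `C`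
(up to duplicate literals). -/
def IsCondensation (D C : Clause) : Prop :=
  SubClause D C ∧ D.length < C.length ∧
    ∃ σ : Subst, ∀ L : Lit, L ∈ D ↔ L ∈ Clause.subst σ C

/-- A clause `C ∨ D` is separable into `C` and `D` if both are non-empty and neither
variable set is included in the other. -/
def Separable (C D : Clause) : Prop :=
  C ≠ [] ∧ D ≠ [] ∧ ¬ Clause.vars C ⊆ Clause.vars D ∧ ¬ Clause.vars D ⊆ Clause.vars C

/-- A clause is indecomposable if it cannot be partitioned into two non-empty
variable-disjoint subclauses. -/
def Clause.indecomposable (C : Clause) : Prop :=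
  ¬ ∃ D E : Clause, D ≠ [] ∧ E ≠ [] ∧
      (↑C : Multiset Lit) = (↑D : Multiset Lit) + (↑E : Multiset Lit) ∧
      Clause.vars D ∩ Clause.vars E = ∅

/-- The predicate symbols occurring in a clause set. -/
def SetPreds (N : Set Clause) : Set ℕ := {p | ∃ C ∈ N, p ∈ Clause.preds C}

/-! ### Orderings -/

namespace Head

def rank : Head → ℕ
  | .pr _ => 0
  | .cn _ => 1
  | .fn _ => 2

def idx : Head → ℕ
  | .pr n => n
  | .cn n => n
  | .fn n => n

/-- The precedence: every function symbol is greater than every constant, and every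
constant is greater than every predicate symbol. -/
def prec (g h : Head) : Prop := g.rank < h.rank ∨ (g.rank = h.rank ∧ g.idx < h.idx)

end Head

/-- The lexicographic path ordering on terms induced by the precedence `Head.prec`.
`LpoGT s t` means `s ≻_lpo t`. -/
inductive LpoGT : Term → Term → Prop
  | subRefl {h : Head} {ss : List Term} {t : Term} :
      t ∈ ss → LpoGT (.app h ss) t
  | sub {h : Head} {ss : List Term} {t : Term} (s : Term) :
      s ∈ ss → LpoGT s t → LpoGT (.app h ss) t
  | prec {h g : Head} {ss ts : List Term} :
      Head.prec g h → (∀ t ∈ ts, LpoGT (.app h ss) t) → LpoGT (.app h ss) (.app g ts)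
  | lex {h : Head} {ss ts u ss' ts' : List Term} {s t : Term} :
      ss = u ++ s :: ss' → ts = u ++ t :: ts' → LpoGT s t →
      (∀ t' ∈ ts, LpoGT (.app h ss) t') → LpoGT (.app h ss) (.app h ts)

/-- The induced lexicographic path ordering on literals, where a negative literal is
greater than the corresponding positive literal. -/
def Lit.lpoGT (L1 L2 : Lit) : Prop :=
  LpoGT L1.atom.toTerm L2.atom.toTerm ∨
    (L1.atom.toTerm = L2.atom.toTerm ∧ L1.pos = false ∧ L2.pos = true)

/-- Admissible orderings on literals; `ord L L'` means `L ≻ L'`. -/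
structure Admissible (ord : Lit → Lit → Prop) : Prop where
  trans : ∀ {a b c : Lit}, ord a b → ord b c → ord a c
  irrefl : ∀ a : Lit, ¬ ord a a
  totalGround : ∀ a b : Lit, a.ground → b.ground → a = b ∨ ord a b ∨ ord b a
  wfGround : WellFounded fun a b : Lit => a.ground ∧ b.ground ∧ ord b a
  liftable : ∀ (a b : Lit) (σ : Subst), ord a b → ord (a.subst σ) (b.subst σ)
  negGtPos : ∀ a : Atom, a.ground → ord (Lit.mkNeg a) (Lit.mkPos a)
  negCompat : ∀ a b : Atom, a.ground → b.ground →
    ord (Lit.mkPos b) (Lit.mkPos a) → ord (Lit.mkPos b) (Lit.mkNeg a)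

/-- The multiset extension of a literal ordering to clauses; `ClauseGT ord C D` means
`C ≻ D`. -/
def ClauseGT (ord : Lit → Lit → Prop) (C D : Clause) : Prop :=
  ∃ X Y Z : Multiset Lit,
    (↑C : Multiset Lit) = Z + X ∧ (↑D : Multiset Lit) = Z + Y ∧ X ≠ 0 ∧
      ∀ y ∈ Y, ∃ x ∈ X, ord x y

/-- `L` is maximal with respect to a clause `C` (`C` not necessarily containing `L`):
some ground instance of `L` is not smaller than the corresponding instances of the
literals of `C`. -/
def maxIn (ord : Lit → Lit → Prop) (L : Lit) (C : Clause) : Prop :=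
  ∃ σ : Subst, Lit.ground (L.subst σ) ∧ Clause.ground (Clause.subst σ C) ∧
    ∀ L' ∈ C, ¬ ord (Lit.subst σ L') (Lit.subst σ L)

/-- `L` is strictly maximal with respect to a clause `C`. -/
def strictMaxIn (ord : Lit → Lit → Prop) (L : Lit) (C : Clause) : Prop :=
  ∃ σ : Subst, Lit.ground (L.subst σ) ∧ Clause.ground (Clause.subst σ C) ∧
    ∀ L' ∈ C, ord (Lit.subst σ L) (Lit.subst σ L')

/-! ### Redundancy -/

def GroundInstanceOf (D C : Clause) : Prop := (∃ σ : Subst, D = Clause.subst σ C) ∧ Clause.ground D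

/-- Redundancy of a clause with respect to a clause set `N`:  every ground instance is
entailed by finitely many smaller ground instances of clauses of `N`. -/
def redundantClause (ord : Lit → Lit → Prop) (N : Set Clause) (C : Clause) : Prop :=
  ∀ D : Clause, GroundInstanceOf D C →
    ∃ S : Finset Clause, (∀ E ∈ S, ∃ C' ∈ N, GroundInstanceOf E C') ∧
      entails (↑S) D ∧ ∀ E ∈ S, ClauseGT ord D E

/-- An inference is redundant in `N` if a premise is redundant, or its conclusion is
redundant in `N` or belongs to `N`. -/
def RedundantInference (ord : Lit → Lit → Prop) (N : Set Clause)
    (premises : List Clause) (concl : Clause) : Prop :=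
  (∃ p ∈ premises, redundantClause ord N p) ∨ redundantClause ord N concl ∨ concl ∈ N

/-! ### Selection and eligibility -/

/-- Selection functions: select a set of negative literals of a clause. -/
def SelFn := Clause → Set Lit

def SelOK (sel : SelFn) : Prop := ∀ C : Clause, ∀ L ∈ sel C, L ∈ C ∧ L.pos = false

/-- A literal is eligible if it is selected, or nothing is selected and it is maximal. -/
def Eligible (ord : Lit → Lit → Prop) (sel : SelFn) (C : Clause) (L : Lit) : Prop :=
  (sel C = ∅ ∧ L ∈ C ∧ maxIn ord L C) ∨ L ∈ sel C

/-- Eligibility under the refinement T-Refine (Algorithm 1), in the cases not depending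
on side premises:  maximal literals for ground clauses and clauses with positive
compound terms, a selected negative compound-term literal, or a selected guard. -/
def EligibleTR (C : Clause) (L : Lit) : Prop :=
  L ∈ C ∧
    ((Clause.ground C ∧ maxIn Lit.lpoGT L C) ∨
     (¬ Clause.ground C ∧ Clause.hasNegCompound C ∧ L.pos = false ∧ L.hasCompound) ∨
     (¬ Clause.ground C ∧ ¬ Clause.hasNegCompound C ∧ Clause.hasCompound C ∧
        maxIn Lit.lpoGT L C) ∨
     (¬ Clause.ground C ∧ ¬ Clause.hasCompound C ∧ L.isGuardOf C))

/-! ### Top-variable resolution -/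

/-- `x` is a top variable of the negative atoms `A i` with respect to the candidate
unifier `σ'`:  the depth of `σ' x` is maximal. -/
def IsTopVar (n : ℕ) (A : Fin n → Atom) (σ' : Subst) (x : ℕ) : Prop :=
  (∃ i, x ∈ (A i).vars) ∧
    ∀ y : ℕ, (∃ i, y ∈ (A i).vars) → (σ' y).depth ≤ (σ' x).depth

/-- The data of an application of the top-variable resolution rule TRes:
main premise `¬A₁ ∨ … ∨ ¬Aₙ ∨ D`,  side premises `Bᵢ ∨ Dᵢ`,
`σ'` a simultaneous mgu of all `n` pairs used to compute top variables, and
`σ` a simultaneous mgu of the first `m` (top-variable) pairs. -/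
structure TResApp where
  n : ℕ
  m : ℕ
  A : Fin n → Atom
  B : Fin n → Atom
  Ds : Fin n → Clause
  D : Clause
  σ' : Subst
  σ : Subst

namespace TResApp

def mainPremise (t : TResApp) : Clause :=
  (List.ofFn fun i => Lit.mkNeg (t.A i)) ++ t.D

def sidePremise (t : TResApp) (i : Fin t.n) : Clause :=
  Lit.mkPos (t.B i) :: t.Ds i

def sidePremises (t : TResApp) : List Clause := List.ofFn t.sidePremise

def resolvent (t : TResApp) : Clause :=
  Clause.subst t.σ
    ((((List.finRange t.n).filter fun i => i.1 < t.m).flatMap t.Ds) ++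
     (((List.finRange t.n).filter fun i => t.m ≤ i.1).map fun i => Lit.mkNeg (t.A i)) ++
     t.D)

/-- Side conditions of the TRes rule. -/
def wf (ord : Lit → Lit → Prop) (t : TResApp) : Prop :=
  0 < t.m ∧ t.m ≤ t.n ∧
  (∀ L ∈ t.D, L.pos = true) ∧
  IsSimMGU t.σ' ((List.finRange t.n).map fun i => (t.A i, t.B i)) ∧
  IsSimMGU t.σ (((List.finRange t.n).filter fun i => i.1 < t.m).map fun i => (t.A i, t.B i)) ∧
  (∀ i : Fin t.n, i.1 < t.m ↔ ∃ x, IsTopVar t.n t.A t.σ' x ∧ x ∈ (t.A i).vars) ∧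
  (∀ i, strictMaxIn ord (Lit.mkPos (t.B i)) (t.Ds i)) ∧
  (∀ i, Clause.vars (t.sidePremise i) ∩ Clause.vars t.mainPremise = ∅) ∧
  (∀ i j, i ≠ j → Clause.vars (t.sidePremise i) ∩ Clause.vars (t.sidePremise j) = ∅)

end TResApp

/-! ### The generating inferences of T-Inf -/

/-- The conclusion-generating inferences of the top-variable inference system T-Inf:
ordered resolution with selection (Res), ordered factoring (Fact), and top-variable
resolution (TRes). `TInfInf ord sel ps c` means `c` is the conclusion of an inference
with premises `ps`. -/
inductive TInfInf (ord : Lit → Lit → Prop) (sel : SelFn) : List Clause → Clause → Prop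
  | res {B A : Atom} {D1 D : Clause} {σ : Subst} :
      IsMGU σ A B →
      sel (Lit.mkPos B :: D1) = ∅ →
      strictMaxIn ord (Lit.mkPos B) D1 →
      Eligible ord sel (Lit.mkNeg A :: D) (Lit.mkNeg A) →
      Clause.vars (Lit.mkPos B :: D1) ∩ Clause.vars (Lit.mkNeg A :: D) = ∅ →
      TInfInf ord sel [Lit.mkPos B :: D1, Lit.mkNeg A :: D] (Clause.subst σ (D1 ++ D))
  | fact {A1 A2 : Atom} {C : Clause} {σ : Subst} :
      IsMGU σ A1 A2 →
      sel (C ++ [Lit.mkPos A1, Lit.mkPos A2]) = ∅ →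
      maxIn ord (Lit.mkPos A1) (C ++ [Lit.mkPos A2]) →
      TInfInf ord sel [C ++ [Lit.mkPos A1, Lit.mkPos A2]] (Clause.subst σ (C ++ [Lit.mkPos A1]))
  | tres (t : TResApp) :
      t.wf ord →
      (∀ i, sel (t.sidePremise i) = ∅) →
      (∀ i : Fin t.n, i.1 < t.m → Lit.mkNeg (t.A i) ∈ sel t.mainPremise) →
      TInfInf ord sel (t.sidePremises ++ [t.mainPremise]) t.resolvent

/-- `N` is saturated up to redundancy with respect to the inference system `inf`:
every inference from non-redundant premises of `N` is redundant in `N`. -/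
def SaturatedUpToRedundancy (ord : Lit → Lit → Prop)
    (inf : List Clause → Clause → Prop) (N : Set Clause) : Prop :=
  ∀ (ps : List Clause) (c : Clause), inf ps c → (∀ p ∈ ps, p ∈ N) →
    RedundantInference ord N ps c


/-! ### Surface literals, chained and isolated variables of query clauses -/

/-- `L` is a surface literal of `Q`: no other literal of `Q` has a strictly larger
variable set. -/
def SurfaceLit (Q : Clause) (L : Lit) : Prop :=
  L ∈ Q ∧ ∀ L' ∈ Q, ¬ (L.vars ⊂ L'.vars)

/-- `x` is a chained variable of `Q`: it occurs in two distinct surface literals with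
different, mutually non-inclusive variable sets. -/
def ChainedVar (Q : Clause) (x : ℕ) : Prop :=
  ∃ L L' : Lit, SurfaceLit Q L ∧ SurfaceLit Q L' ∧ L ≠ L' ∧
    ¬ L.vars ⊆ L'.vars ∧ ¬ L'.vars ⊆ L.vars ∧ x ∈ L.vars ∧ x ∈ L'.vars

/-- `x` is an isolated variable of `Q`: a variable of `Q` that is not chained. -/
def IsolatedVar (Q : Clause) (x : ℕ) : Prop := x ∈ Clause.vars Q ∧ ¬ ChainedVar Q x

/-- A query clause is isolated-only if all its variables are isolated. -/
def Clause.isolatedOnly (Q : Clause) : Prop := ∀ x ∈ Clause.vars Q, ¬ ChainedVar Q x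

/-- A query clause is chained-only if all its variables are chained. -/
def Clause.chainedOnly (Q : Clause) : Prop := ∀ x ∈ Clause.vars Q, ChainedVar Q x

/-! ### The inferences of Q-AR -/

/-- The inferences of Q-AR: the T-Inf inferences together with the separation
inferences (Sep) and the T-Trans renaming inferences, both introducing fresh,
smaller definer predicate symbols. -/
inductive QARInf (ord : Lit → Lit → Prop) (sel : SelFn) : List Clause → Clause → Prop
  | tinf {ps : List Clause} {c : Clause} : TInfInf ord sel ps c → QARInf ord sel ps c
  | sepL {C D : Clause} {ds : ℕ} {xs : List ℕ} :
      Separable C D → {x | x ∈ xs} = Clause.vars C ∩ Clause.vars D →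
      ds ∉ Clause.preds (C ++ D) →
      QARInf ord sel [C ++ D] (Lit.mkNeg ⟨ds, xs.map Term.var⟩ :: C)
  | sepR {C D : Clause} {ds : ℕ} {xs : List ℕ} :
      Separable C D → {x | x ∈ xs} = Clause.vars C ∩ Clause.vars D →
      ds ∉ Clause.preds (C ++ D) →
      QARInf ord sel [C ++ D] (Lit.mkPos ⟨ds, xs.map Term.var⟩ :: D)
  | ttransDef {E F : Clause} {d : ℕ} {xs : List ℕ} :
      {x | x ∈ xs} = Clause.vars E → d ∉ Clause.preds (F ++ E) →
      QARInf ord sel [F ++ E] (Lit.mkPos ⟨d, xs.map Term.var⟩ :: E)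
  | ttransQ {E F : Clause} {d : ℕ} {xs : List ℕ} :
      {x | x ∈ xs} = Clause.vars E → d ∉ Clause.preds (F ++ E) →
      QARInf ord sel [F ++ E] (F ++ [Lit.mkNeg ⟨d, xs.map Term.var⟩])

/-! ### Q-AR as a transition system on clause sets -/

/-- A single derivation step of the procedure Q-AR on clause sets: adding a
Res/TRes/Fact conclusion, replacement by a condensation, deletion of tautologies and
variants, separation (Sep) and the renaming T-Trans (both with fresh definer
predicate symbols). -/
inductive QARStep : Set Clause → Set Clause → Prop
  | res {N : Set Clause} {A B : Atom} {D1 D : Clause} {σ : Subst} :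
      (Lit.mkPos B :: D1) ∈ N → (Lit.mkNeg A :: D) ∈ N → IsMGU σ A B →
      QARStep N (insert (Clause.subst σ (D1 ++ D)) N)
  | tres {N : Set Clause} (t : TResApp) :
      (∀ i, t.sidePremise i ∈ N) → t.mainPremise ∈ N →
      (∀ i : Fin t.n, i.1 < t.m → Atom.subst t.σ (t.A i) = Atom.subst t.σ (t.B i)) →
      QARStep N (insert t.resolvent N)
  | fact {N : Set Clause} {A1 A2 : Atom} {C : Clause} {σ : Subst} :
      (C ++ [Lit.mkPos A1, Lit.mkPos A2]) ∈ N → IsMGU σ A1 A2 →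
      QARStep N (insert (Clause.subst σ (C ++ [Lit.mkPos A1])) N)
  | conden {N : Set Clause} {C D : Clause} :
      C ∈ N → IsCondensation D C → QARStep N (insert D (N \ {C}))
  | deleteTaut {N : Set Clause} {C : Clause} :
      C ∈ N → Tautology C → QARStep N (N \ {C})
  | deleteVariant {N : Set Clause} {C C' : Clause} :
      C ∈ N → C' ∈ N → C ≠ C' → Variant C C' → QARStep N (N \ {C})
  | sep {N : Set Clause} {C D : Clause} {ds : ℕ} {xs : List ℕ} :
      (C ++ D) ∈ N → Separable C D → {x | x ∈ xs} = Clause.vars C ∩ Clause.vars D →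
      ds ∉ SetPreds N →
      QARStep N (insert (Lit.mkNeg ⟨ds, xs.map Term.var⟩ :: C)
        (insert (Lit.mkPos ⟨ds, xs.map Term.var⟩ :: D) (N \ {C ++ D})))
  | ttrans {N : Set Clause} {E F : Clause} {d : ℕ} {xs : List ℕ} :
      (F ++ E) ∈ N → {x | x ∈ xs} = Clause.vars E → d ∉ SetPreds N →
      QARStep N (insert (F ++ [Lit.mkNeg ⟨d, xs.map Term.var⟩])
        (insert (Lit.mkPos ⟨d, xs.map Term.var⟩ :: E) (N \ {F ++ E})))

/-- `x` is a top variable of the clause `C` with respect to the candidate unifier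
`σ'`:  among the variables of the negative literals of `C`, the depth of `σ' x` is
maximal. -/
def TopVarOfClause (C : Clause) (σ' : Subst) (x : ℕ) : Prop :=
  (∃ L ∈ C, L.pos = false ∧ x ∈ L.vars) ∧
    ∀ y : ℕ, (∃ L ∈ C, L.pos = false ∧ y ∈ L.vars) → (σ' y).depth ≤ (σ' x).depth

/-- The possible sets of eligible literals of a clause under the refinement T-Refine
(Algorithm 1):  the ≻_lpo-maximal literals if the clause is ground;  a selected
negative compound-term literal if one exists;  the maximal literals if the clause has
positive compound terms;  a selected guard for flat guarded clauses;  and for flat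
loosely guarded clauses the top-variable literals with respect to a candidate unifier
with side premises, or all negative literals if no side premises exist. -/
inductive EligSet : Clause → Set Lit → Prop
  | ground {C : Clause} : Clause.ground C →
      EligSet C {L | L ∈ C ∧ maxIn Lit.lpoGT L C}
  | negCompound {C : Clause} {L : Lit} : ¬ Clause.ground C → L ∈ C → L.pos = false →
      L.hasCompound → EligSet C {L}
  | posCompound {C : Clause} : ¬ Clause.ground C → ¬ Clause.hasNegCompound C →
      Clause.hasCompound C → EligSet C {L | L ∈ C ∧ maxIn Lit.lpoGT L C}
  | guard {C : Clause} {L : Lit} : ¬ Clause.ground C → ¬ Clause.hasCompound C →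
      L.isGuardOf C → EligSet C {L}
  | top {C : Clause} (σ' : Subst) : ¬ Clause.ground C → ¬ Clause.hasCompound C →
      EligSet C {L | L ∈ C ∧ L.pos = false ∧ ∃ x, TopVarOfClause C σ' x ∧ x ∈ L.vars}
  | allNeg {C : Clause} : ¬ Clause.ground C → ¬ Clause.hasCompound C →
      EligSet C {L | L ∈ C ∧ L.pos = false}

set_option linter.dupNamespace false
open Term

lemma subst_app (σ : Subst) (h : Head) (ts : List Term) :
    Term.subst σ (.app h ts) = .app h (ts.map (Term.subst σ)) := by
  rw [Term.subst]
  congr 1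
  exact List.attach_map_val

lemma sizeOf_lt_of_mem_term {t : Term} {ts : List Term} (h : t ∈ ts) (hd : Head) :
    sizeOf t < sizeOf (Term.app hd ts) := by
  have := List.sizeOf_lt_of_mem h
  simp only [Term.app.sizeOf_spec]; omega

lemma SubtermOf.size_le : ∀ {s t : Term}, Term.SubtermOf s t → sizeOf s ≤ sizeOf t := by
  intro s t h
  induction h with
  | refl => exact le_refl _
  | @app h ts t mem sub ih =>
    have := List.sizeOf_lt_of_mem mem
    simp only [Term.app.sizeOf_spec]; omega

lemma subterm_trans {a b c : Term} (h1 : Term.SubtermOf a b) (h2 : Term.SubtermOf b c) :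
    Term.SubtermOf a c := by
  induction h2 with
  | refl => exact h1
  | app mem _ ih => exact Term.SubtermOf.app mem ih

lemma mem_subterm {t : Term} {ts : List Term} (h : t ∈ ts) (hd : Head) :
    Term.SubtermOf t (.app hd ts) := Term.SubtermOf.app h (.refl t)
lemma prec_trans {a b c : Head} (h1 : Head.prec a b) (h2 : Head.prec b c) : Head.prec a c := by
  unfold Head.prec at *; omega

lemma prec_irrefl (a : Head) : ¬ Head.prec a a := by
  unfold Head.prec; omega

lemma prec_fn {n : ℕ} {h : Head} (hp : Head.prec (.fn n) h) : ∃ m, h = .fn m ∧ n < m := by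
  cases h <;> simp only [Head.prec, Head.rank, Head.idx] at hp <;> first
    | omega
    | exact ⟨_, rfl, by omega⟩

lemma lpo_subterm : ∀ {s t : Term}, LpoGT s t → Term.SubtermOf s t → False := by
  intro s t h
  induction h with
  | @subRefl h ss t mem =>
    intro hsub
    have h1 := SubtermOf.size_le hsub
    have h2 := sizeOf_lt_of_mem_term mem h
    omega
  | @sub h ss t s mem hlt ih =>
    intro hsub
    exact ih (subterm_trans (mem_subterm mem h) hsub)
  | @prec h g ss ts hp hall ih =>
    intro hsub
    cases hsub with
    | refl =>
      exact prec_irrefl _ hp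
    | app mem hsub' => exact ih _ mem hsub'
  | lex e1 e2 h0 hall ih0 ih =>
    intro hsub
    cases hsub with
    | refl =>
      rw [e1] at e2
      have h' := List.append_inj_right e2 rfl
      injection h' with h1 h2
      exact ih0 (h1 ▸ Term.SubtermOf.refl _)
    | app mem hsub' => exact ih _ mem hsub'
lemma lpo_irrefl (t : Term) : ¬ LpoGT t t := fun h => lpo_subterm h (.refl t)

lemma list_decomp {α : Type} : ∀ (a : List α) (b : List α) (x y : α) (a' b' : List α),
    a ++ x :: a' = b ++ y :: b' →
    (a = b ∧ x = y ∧ a' = b') ∨ (∃ m, b = a ++ x :: m) ∨ (∃ m, a = b ++ y :: m) := by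
  intro a
  induction a with
  | nil =>
    intro b x y a' b' h
    cases b with
    | nil => simp_all
    | cons hb tb =>
      simp only [List.nil_append, List.cons_append, List.cons.injEq] at h
      exact Or.inr (Or.inl ⟨tb, by rw [h.1]; rfl⟩)
  | cons ha ta ih =>
    intro b x y a' b' h
    cases b with
    | nil =>
      simp only [List.cons_append, List.nil_append, List.cons.injEq] at h
      exact Or.inr (Or.inr ⟨ta, by rw [h.1]; rfl⟩)
    | cons hb tb =>
      simp only [List.cons_append, List.cons.injEq] at h
      obtain ⟨h1, h2⟩ := h
      rcases ih tb x y a' b' h2 with ⟨e1, e2, e3⟩ | ⟨m, hm⟩ | ⟨m, hm⟩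
      · exact Or.inl ⟨by rw [h1, e1], e2, e3⟩
      · exact Or.inr (Or.inl ⟨m, by rw [h1, hm]; rfl⟩)
      · exact Or.inr (Or.inr ⟨m, by rw [h1, hm]; rfl⟩)
lemma lpo_trans_aux : ∀ (n : ℕ), ∀ (s t u : Term), sizeOf s + sizeOf t + sizeOf u ≤ n →
    LpoGT s t → LpoGT t u → LpoGT s u := by
  intro n
  induction n using Nat.strong_induction_on with
  | _ n IH =>
  intro s t u hsz h1 h2
  cases h1 with
  | @subRefl h ss t mem => exact LpoGT.sub t mem h2
  | @sub h ss t s' mem hlt =>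
    have hs' : sizeOf s' < sizeOf (Term.app h ss) := sizeOf_lt_of_mem_term mem h
    exact LpoGT.sub s' mem (IH (sizeOf s' + sizeOf t + sizeOf u)
      (by omega) s' t u (le_refl _) hlt h2)
  | @prec h g ss ts hp hall =>
    have hst : LpoGT (Term.app h ss) (Term.app g ts) := LpoGT.prec hp hall
    cases h2 with
    | subRefl mem => exact hall _ mem
    | sub t'' mem hlt =>
      have : sizeOf t'' < sizeOf (Term.app g ts) := sizeOf_lt_of_mem_term mem g
      exact IH (sizeOf (Term.app h ss) + sizeOf t'' + sizeOf u) (by omega) _ _ _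
        (le_refl _) (hall _ mem) hlt
    | prec hpf hall2 =>
      rename_i f us
      refine LpoGT.prec (prec_trans hpf hp) ?_
      intro u' hm
      have : sizeOf u' < sizeOf (Term.app f us) := sizeOf_lt_of_mem_term hm f
      exact IH (sizeOf (Term.app h ss) + sizeOf (Term.app g ts) + sizeOf u')
        (by omega) _ _ _ (le_refl _) hst (hall2 _ hm)
    | lex e3 e4 h1' hall2 =>
      rename_i us w2 ts3 us2 t1 u1
      refine LpoGT.prec hp ?_
      intro u' hm
      have : sizeOf u' < sizeOf (Term.app g us) := sizeOf_lt_of_mem_term hm g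
      exact IH (sizeOf (Term.app h ss) + sizeOf (Term.app g ts) + sizeOf u')
        (by omega) _ _ _ (le_refl _) hst (hall2 _ hm)
  | @lex h ss ts w ss' ts' s0 t0 e1 e2 h0 hall =>
    have hst : LpoGT (Term.app h ss) (Term.app h ts) := LpoGT.lex e1 e2 h0 hall
    cases h2 with
    | subRefl mem => exact hall _ mem
    | sub t'' mem hlt =>
      have : sizeOf t'' < sizeOf (Term.app h ts) := sizeOf_lt_of_mem_term mem h
      exact IH (sizeOf (Term.app h ss) + sizeOf t'' + sizeOf u) (by omega) _ _ _
        (le_refl _) (hall _ mem) hlt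
    | prec hpf hall2 =>
      rename_i f us
      refine LpoGT.prec hpf ?_
      intro u' hm
      have : sizeOf u' < sizeOf (Term.app f us) := sizeOf_lt_of_mem_term hm f
      exact IH (sizeOf (Term.app h ss) + sizeOf (Term.app h ts) + sizeOf u')
        (by omega) _ _ _ (le_refl _) hst (hall2 _ hm)
    | lex e3 e4 h1' hall2 =>
      rename_i us w2 ts3 us2 t1 u1
      have hside : ∀ u' ∈ us, LpoGT (Term.app h ss) u' := by
        intro u' hm
        have : sizeOf u' < sizeOf (Term.app h us) := sizeOf_lt_of_mem_term hm h
        exact IH (sizeOf (Term.app h ss) + sizeOf (Term.app h ts) + sizeOf u')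
          (by omega) _ _ _ (le_refl _) hst (hall2 _ hm)
      rw [e2] at e3
      rcases list_decomp w w2 t0 t1 ts' ts3 e3 with ⟨q1, q2, q3⟩ | ⟨m, hm⟩ | ⟨m, hm⟩
      · subst q1
        have hs0 : sizeOf s0 < sizeOf (Term.app h ss) := sizeOf_lt_of_mem_term (by rw [e1]; simp) h
        have ht1 : sizeOf t1 < sizeOf (Term.app h ts) := sizeOf_lt_of_mem_term (by rw [e2, ← q2]; simp) h
        have hu1 : sizeOf u1 < sizeOf (Term.app h us) := sizeOf_lt_of_mem_term (by rw [e4]; simp) h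
        have h01 : LpoGT s0 u1 := IH (sizeOf s0 + sizeOf t1 + sizeOf u1) (by omega)
          _ _ _ (le_refl _) (q2 ▸ h0) h1'
        exact LpoGT.lex e1 e4 h01 hside
      · have e4' : us = w ++ t0 :: (m ++ u1 :: us2) := by
          rw [e4, hm]; simp
        exact LpoGT.lex e1 e4' h0 hside
      · have e1' : ss = w2 ++ t1 :: (m ++ s0 :: ss') := by
          rw [e1, hm]; simp
        exact LpoGT.lex e1' e4 h1' hside

lemma lpo_trans {s t u : Term} (h1 : LpoGT s t) (h2 : LpoGT t u) : LpoGT s u :=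
  lpo_trans_aux _ s t u (le_refl _) h1 h2
lemma litLpo_trans {a b c : Lit} (h1 : Lit.lpoGT a b) (h2 : Lit.lpoGT b c) : Lit.lpoGT a c := by
  rcases h1 with h1 | ⟨e1, p1, p1'⟩ <;> rcases h2 with h2 | ⟨e2, p2, p2'⟩
  · exact Or.inl (lpo_trans h1 h2)
  · exact Or.inl (e2 ▸ h1)
  · exact Or.inl (e1 ▸ h2)
  · rw [p1'] at p2; cases p2
lemma litLpo_irrefl (a : Lit) : ¬ Lit.lpoGT a a := by
  rintro (h | ⟨e, p1, p2⟩)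
  · exact lpo_irrefl _ h
  · rw [p1] at p2; cases p2

/-- subterm closed under fn-index bound -/
def MaxFnLt (k : ℕ) (t : Term) : Prop :=
  ∀ n ts, Term.SubtermOf (Term.app (.fn n) ts) t → n < k

lemma maxFnLt_of_size (t : Term) : MaxFnLt (sizeOf t) t := by
  intro n ts h
  have h1 := SubtermOf.size_le h
  have h2 : sizeOf (Term.app (Head.fn n) ts) = 1 + (1 + n) + sizeOf ts := by
    simp [Term.app.sizeOf_spec, Head.fn.sizeOf_spec, sizeOf_nat]
  omega

lemma maxFnLt_mono_k {k k' : ℕ} (h : k ≤ k') {t : Term} (ht : MaxFnLt k t) : MaxFnLt k' t :=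
  fun n ts hs => lt_of_lt_of_le (ht n ts hs) h

lemma maxFnLt_subterm {k : ℕ} {s t : Term} (hsub : Term.SubtermOf s t) (ht : MaxFnLt k t) :
    MaxFnLt k s := fun n ts hs => ht n ts (subterm_trans hs hsub)

lemma maxFnLt_lpo {k : ℕ} : ∀ {w v : Term}, LpoGT w v → MaxFnLt k w → MaxFnLt k v := by
  intro w v h
  induction h with
  | subRefl mem => exact fun hk => maxFnLt_subterm (mem_subterm mem _) hk
  | sub s' mem hlt ih => exact fun hk => ih (maxFnLt_subterm (mem_subterm mem _) hk)
  | @prec h g ss ts hp hall ih =>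
    intro hk n ts0 hsub
    cases hsub with
    | refl =>
      obtain ⟨m, hm, hnm⟩ := prec_fn hp
      have := hk m ss (by rw [← hm]; exact Term.SubtermOf.refl _)
      omega
    | app mem hsub' => exact ih _ mem hk n ts0 hsub'
  | @lex h ss ts w' ss' ts' s0 t0 e1 e2 h0 hall ih0 ih =>
    intro hk n ts0 hsub
    cases hsub with
    | refl => exact hk n ss (Term.SubtermOf.refl _)
    | app mem hsub' => exact ih _ mem hk n ts0 hsub'
lemma hasVar_iff_subterm_var {t : Term} {x : ℕ} :
    Term.HasVar t x ↔ Term.SubtermOf (.var x) t := by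
  constructor
  · intro h
    induction h with
    | var => exact Term.SubtermOf.refl _
    | app mem _ ih => exact Term.SubtermOf.app mem ih
  · intro h
    generalize hv : Term.var x = v at h
    induction h with
    | refl => rw [← hv]; exact Term.HasVar.var x
    | app mem _ ih => exact Term.HasVar.app mem ih

lemma subterm_subst_cases : ∀ {s w : Term}, Term.SubtermOf s w → ∀ (σ : Subst) (t : Term),
    w = Term.subst σ t →
    (∃ u, Term.SubtermOf u t ∧ s = Term.subst σ u) ∨
    (∃ v, Term.HasVar t v ∧ Term.SubtermOf s (σ v)) := by
  intro s w h
  induction h with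
  | refl =>
    intro σ t ht
    exact Or.inl ⟨t, Term.SubtermOf.refl t, ht⟩
  | @app hd ws m mem hsub ih =>
    intro σ t ht
    cases t with
    | var v =>
      rw [Term.subst] at ht
      exact Or.inr ⟨v, Term.HasVar.var v, ht ▸ Term.SubtermOf.app mem hsub⟩
    | app h' ts =>
      rw [subst_app] at ht
      injection ht with h1 h2
      subst h1 h2
      rcases List.mem_map.mp mem with ⟨t0, ht0, rfl⟩
      rcases ih σ t0 rfl with ⟨u, hu, he⟩ | ⟨v, hv, hs⟩
      · exact Or.inl ⟨u, Term.SubtermOf.app ht0 hu, he⟩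
      · exact Or.inr ⟨v, Term.HasVar.app ht0 hv, hs⟩

lemma hasVar_subterm_subst {t : Term} {v : ℕ} (σ : Subst) (h : Term.HasVar t v) :
    Term.SubtermOf (σ v) (Term.subst σ t) := by
  induction h with
  | var x => rw [Term.subst]; exact Term.SubtermOf.refl _
  | @app hd ts x t' mem _ ih =>
    rw [subst_app]
    exact Term.SubtermOf.app (List.mem_map.mpr ⟨t', mem, rfl⟩) ih
def Term.varList : Term → List ℕ
  | .var x => [x]
  | .app _ ts => (ts.attach.map fun t => Term.varList t.1).flatten
  decreasing_by
    have := List.sizeOf_lt_of_mem t.2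
    simp only [Term.app.sizeOf_spec]
    omega

lemma varList_app (h : Head) (ts : List Term) :
    Term.varList (.app h ts) = (ts.map Term.varList).flatten := by
  rw [Term.varList]
  congr 1
  exact List.attach_map_val

lemma mem_varList_iff : ∀ {t : Term} {x : ℕ}, x ∈ Term.varList t ↔ Term.HasVar t x := by
  have key : ∀ (n : ℕ) (t : Term), sizeOf t ≤ n → ∀ x, (x ∈ Term.varList t ↔ Term.HasVar t x) := by
    intro n
    induction n using Nat.strong_induction_on with
    | _ n IH =>
    intro t hsz x
    cases t with
    | var y =>
      rw [Term.varList]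
      constructor
      · intro h; rcases List.mem_singleton.mp h with rfl; exact Term.HasVar.var x
      · rintro h; cases h; exact List.mem_singleton.mpr rfl
    | app hd ts =>
      rw [varList_app]
      constructor
      · intro h
        rcases List.mem_flatten.mp h with ⟨l, hl, hx⟩
        rcases List.mem_map.mp hl with ⟨t0, ht0, rfl⟩
        have hs := sizeOf_lt_of_mem_term ht0 hd
        exact Term.HasVar.app ht0 ((IH (sizeOf t0) (by omega) t0 (le_refl _) x).mp hx)
      · intro h
        cases h with
        | app mem hv =>
          rename_i t0
          have hs := sizeOf_lt_of_mem_term mem hd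
          exact List.mem_flatten.mpr ⟨Term.varList t0, List.mem_map.mpr ⟨t0, mem, rfl⟩,
            (IH (sizeOf t0) (by omega) t0 (le_refl _) x).mpr hv⟩
  intro t x
  exact key (sizeOf t) t (le_refl _) x
lemma toTerm_subst (σ : Subst) (a : Atom) :
    (Atom.subst σ a).toTerm = Term.subst σ a.toTerm := by
  rw [Atom.toTerm, Atom.subst, Atom.toTerm, subst_app]

lemma mem_lit_vars_iff {L : Lit} {x : ℕ} :
    x ∈ L.vars ↔ Term.HasVar L.atom.toTerm x := by
  constructor
  · rintro ⟨t, ht, hx⟩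
    exact Term.HasVar.app ht hx
  · intro h
    cases h with
    | app mem hv => exact ⟨_, mem, hv⟩

lemma subst_ground_of (σ : Subst) (hσ : ∀ v x, ¬ Term.HasVar (σ v) x) (L : Lit) :
    Lit.ground (Lit.subst σ L) := by
  rw [Lit.ground, Lit.vars]
  ext x
  simp only [Set.mem_empty_iff_false, iff_false]
  intro hx
  have hx' : Term.HasVar (Lit.subst σ L).atom.toTerm x := mem_lit_vars_iff.mp hx
  rw [Lit.subst] at hx'
  simp only at hx'
  rw [toTerm_subst] at hx'
  rcases subterm_subst_cases (hasVar_iff_subterm_var.mp hx') σ _ rfl with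
    ⟨u, hu, he⟩ | ⟨v, hv, hs⟩
  · cases u with
    | var v =>
      rw [Term.subst] at he
      exact hσ v x (he ▸ Term.HasVar.var x)
    | app h' ts => rw [subst_app] at he; cases he
  · exact hσ v x (hasVar_iff_subterm_var.mpr hs)

lemma clause_subst_ground_of (σ : Subst) (hσ : ∀ v x, ¬ Term.HasVar (σ v) x) (C : Clause) :
    Clause.ground (Clause.subst σ C) := by
  rw [Clause.ground, Clause.vars]
  ext x
  simp only [Set.mem_empty_iff_false, iff_false, Set.mem_setOf_eq, not_exists]
  rintro L ⟨hL, hx⟩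
  rcases List.mem_map.mp hL with ⟨L0, hL0, rfl⟩
  have := subst_ground_of σ hσ L0
  rw [Lit.ground] at this
  rw [this] at hx
  exact hx

lemma exists_maximal {α : Type} (R : α → α → Prop)
    (htr : ∀ {a b c : α}, R a b → R b c → R a c) (hirr : ∀ a, ¬ R a a) (P : α → Prop) :
    ∀ (l : List α), (∃ a ∈ l, P a) → ∃ a ∈ l, P a ∧ ∀ b ∈ l, P b → ¬ R b a := by
  intro l
  induction l with
  | nil => rintro ⟨a, ha, _⟩; cases ha
  | cons c l' ih =>
    intro hex
    by_cases hl' : ∃ a ∈ l', P a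
    · obtain ⟨a, ha, hPa, hmax⟩ := ih hl'
      by_cases hc : P c ∧ R c a
      · refine ⟨c, List.mem_cons_self, hc.1, ?_⟩
        intro b hb hPb hR
        rcases List.mem_cons.mp hb with rfl | hb'
        · exact hirr _ hR
        · exact hmax b hb' hPb (htr hR hc.2)
      · refine ⟨a, List.mem_cons_of_mem _ ha, hPa, ?_⟩
        intro b hb hPb hR
        rcases List.mem_cons.mp hb with rfl | hb'
        · exact hc ⟨hPb, hR⟩
        · exact hmax b hb' hPb hR
    · obtain ⟨a, ha, hPa⟩ := hex
      rcases List.mem_cons.mp ha with rfl | ha'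
      · refine ⟨a, List.mem_cons_self, hPa, ?_⟩
        intro b hb hPb hR
        rcases List.mem_cons.mp hb with rfl | hb'
        · exact hirr _ hR
        · exact hl' ⟨b, hb', hPb⟩
      · exact absurd ⟨a, ha', hPa⟩ hl'

lemma exists_max_image {α : Type} (f : α → ℕ) :
    ∀ (l : List α), l ≠ [] → ∃ a ∈ l, ∀ b ∈ l, f b ≤ f a := by
  intro l
  induction l with
  | nil => intro h; exact absurd rfl h
  | cons c l' ih =>
    intro _
    cases l' with
    | nil => exact ⟨c, List.mem_singleton.mpr rfl, by intro b hb; rcases List.mem_singleton.mp hb with rfl; exact le_refl _⟩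
    | cons d l'' =>
      obtain ⟨a, ha, hmax⟩ := ih (by simp)
      by_cases h : f a ≤ f c
      · refine ⟨c, List.mem_cons_self, ?_⟩
        intro b hb
        rcases List.mem_cons.mp hb with rfl | hb'
        · exact le_refl _
        · exact le_trans (hmax b hb') h
      · refine ⟨a, List.mem_cons_of_mem _ ha, ?_⟩
        intro b hb
        rcases List.mem_cons.mp hb with rfl | hb'
        · omega
        · exact hmax b hb'

lemma le_foldr_max (l : List ℕ) : ∀ a ∈ l, a ≤ l.foldr max 0 := by
  induction l with
  | nil => intro a ha; cases ha
  | cons c l' ih =>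
    intro a ha
    rcases List.mem_cons.mp ha with rfl | ha'
    · exact le_max_left _ _
    · exact le_trans (ih a ha') (le_max_right _ _)
lemma hasVar_of_subterm {t u : Term} {x : ℕ} (hsub : Term.SubtermOf t u)
    (h : Term.HasVar t x) : Term.HasVar u x :=
  hasVar_iff_subterm_var.mpr (subterm_trans (hasVar_iff_subterm_var.mp h) hsub)

lemma lit_vars_subset {C : Clause} {L : Lit} (hL : L ∈ C) : L.vars ⊆ Clause.vars C :=
  fun x hx => ⟨L, hL, hx⟩

lemma vars_eq_of_hasCompound {C : Clause} {L : Lit} (hcov : Clause.covering C)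
    (hL : L ∈ C) (hc : L.hasCompound) : L.vars = Clause.vars C := by
  obtain ⟨t, ⟨u, hu, hsub⟩, hcomp⟩ := hc
  have h1 : t.vars = Clause.vars C := hcov t ⟨L, hL, u, hu, hsub⟩ hcomp
  apply Set.Subset.antisymm (lit_vars_subset hL)
  intro x hx
  rw [← h1] at hx
  exact ⟨u, hu, hasVar_of_subterm hsub hx⟩

lemma max_core (C : Clause) (x : ℕ) (hx : x ∈ Clause.vars C) :
    ∃ L ∈ C, maxIn Lit.lpoGT L C ∧ x ∈ L.vars := by
  set K := ((C.map fun L => sizeOf L.atom.toTerm).foldr max 0) + 1 with hK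
  set σ : Subst := fun v => if v = x then Term.app (.fn K) [] else Term.app (.fn 0) [] with hσdef
  have hσ : ∀ v y, ¬ Term.HasVar (σ v) y := by
    intro v y h
    simp only [hσdef] at h
    split at h <;> · cases h with | app mem _ => cases mem
  obtain ⟨L0, hL0, hx0⟩ := hx
  obtain ⟨L, hL, hPx, hmax⟩ := exists_maximal
    (fun a b => Lit.lpoGT (Lit.subst σ a) (Lit.subst σ b))
    (fun h1 h2 => litLpo_trans h1 h2) (fun a => litLpo_irrefl _)
    (fun L => x ∈ L.vars) C ⟨L0, hL0, hx0⟩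
  have hfnK : Term.SubtermOf (Term.app (.fn K) []) ((Lit.subst σ L).atom.toTerm) := by
    have hvx : Term.HasVar L.atom.toTerm x := mem_lit_vars_iff.mp hPx
    have h2 := hasVar_subterm_subst σ hvx
    rw [Lit.subst]
    simp only
    rw [toTerm_subst]
    have : σ x = Term.app (.fn K) [] := by simp [hσdef]
    rwa [this] at h2
  refine ⟨L, hL, ⟨σ, subst_ground_of σ hσ L, clause_subst_ground_of σ hσ C, ?_⟩, hPx⟩
  intro L' hL' hlpo
  by_cases hx' : x ∈ L'.vars
  · exact hmax L' hL' hx' hlpo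
  · have hbound : MaxFnLt K (L'.atom.toTerm) := by
      apply maxFnLt_mono_k _ (maxFnLt_of_size _)
      have := le_foldr_max (C.map fun L => sizeOf L.atom.toTerm) (sizeOf L'.atom.toTerm)
        (List.mem_map.mpr ⟨L', hL', rfl⟩)
      omega
    have himg : ∀ v, Term.HasVar L'.atom.toTerm v → MaxFnLt K (σ v) := by
      intro v hv
      have hne : v ≠ x := fun h => hx' (h ▸ mem_lit_vars_iff.mpr hv)
      simp only [hσdef, if_neg hne]
      intro n ts hsub
      cases hsub with
      | refl => omega
      | app mem _ => cases mem
    have hsb : MaxFnLt K ((Lit.subst σ L').atom.toTerm) := by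
      rw [Lit.subst]
      simp only
      rw [toTerm_subst]
      intro n ts hsub
      rcases subterm_subst_cases hsub σ _ rfl with ⟨u, hu, he⟩ | ⟨v, hv, hs⟩
      · cases u with
        | var v =>
          rw [Term.subst] at he
          have hv' : Term.HasVar L'.atom.toTerm v := hasVar_iff_subterm_var.mpr hu
          exact himg v hv' n ts (he ▸ Term.SubtermOf.refl _)
        | app h' ts' =>
          rw [subst_app] at he
          injection he with hh harg
          exact hbound n ts' (hh ▸ hu)
      · exact himg v hv n ts hs
    rcases hlpo with h | ⟨heq, _, _⟩
    · have h2 := maxFnLt_lpo h hsb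
      have := h2 K [] hfnK
      omega
    · rw [heq] at hsb
      have := hsb K [] hfnK
      omega
lemma neg_cover1 {C : Clause} (hC : Clause.guarded C ∨ Clause.looselyGuarded C)
    (hng : ¬ Clause.ground C) :
    ∀ y ∈ Clause.vars C, ∃ L ∈ C, L.pos = false ∧ y ∈ L.vars := by
  intro y hy
  rcases hC with ⟨_, _, hg⟩ | ⟨_, _, hg⟩
  · rcases hg with hg | ⟨L, hLC, hpos, _, hvars⟩
    · exact absurd hg hng
    · exact ⟨L, hLC, hpos, hvars ▸ hy⟩
  · rcases hg with hg | ⟨G, hG1, hG2, _⟩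
    · exact absurd hg hng
    · obtain ⟨L, hLG, hyL⟩ := hG2 y hy
      obtain ⟨hLC, hpos, _⟩ := hG1 L hLG
      exact ⟨L, hLC, hpos, hyL⟩

lemma neg_cover2 {C : Clause} (hC : Clause.guarded C ∨ Clause.looselyGuarded C)
    (hng : ¬ Clause.ground C) :
    ∀ y z, y ∈ Clause.vars C → z ∈ Clause.vars C → y ≠ z →
      ∃ L ∈ C, L.pos = false ∧ y ∈ L.vars ∧ z ∈ L.vars := by
  intro y z hy hz hne
  rcases hC with ⟨_, _, hg⟩ | ⟨_, _, hg⟩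
  · rcases hg with hg | ⟨L, hLC, hpos, _, hvars⟩
    · exact absurd hg hng
    · exact ⟨L, hLC, hpos, hvars ▸ hy, hvars ▸ hz⟩
  · rcases hg with hg | ⟨G, hG1, _, hG3⟩
    · exact absurd hg hng
    · obtain ⟨L, hLG, hyL, hzL⟩ := hG3 y hy z hz hne
      obtain ⟨hLC, hpos, _⟩ := hG1 L hLG
      exact ⟨L, hLC, hpos, hyL, hzL⟩

lemma mem_negVarList {C : Clause} {y : ℕ} :
    y ∈ ((C.filter fun L => L.pos == false).flatMap
        (fun L => L.atom.args.flatMap Term.varList)) ↔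
      ∃ L ∈ C, L.pos = false ∧ y ∈ L.vars := by
  constructor
  · intro h
    rcases List.mem_flatMap.mp h with ⟨L, hL, hy⟩
    rcases List.mem_filter.mp hL with ⟨hLC, hpos⟩
    rcases List.mem_flatMap.mp hy with ⟨t, ht, hyt⟩
    exact ⟨L, hLC, by simpa using hpos, ⟨t, ht, mem_varList_iff.mp hyt⟩⟩
  · rintro ⟨L, hLC, hpos, t, ht, hyt⟩
    refine List.mem_flatMap.mpr ⟨L, List.mem_filter.mpr ⟨hLC, by simp [hpos]⟩, ?_⟩
    exact List.mem_flatMap.mpr ⟨t, ht, mem_varList_iff.mpr hyt⟩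

/-- Lemma C.1:  Under T-Refine, if `ℒ` is the set of eligible literals
of a guarded or loosely guarded clause `C`, then `Var(ℒ) = Var(C)`. -/
theorem eligible_literals_vars (C : Clause)
    (hC : Clause.guarded C ∨ Clause.looselyGuarded C)
    (S : Set Lit) (hS : EligSet C S) :
    {x | ∃ L ∈ S, x ∈ L.vars} = Clause.vars C := by
  have hcov : Clause.covering C := by
    rcases hC with ⟨_, h, _⟩ | ⟨_, h, _⟩ <;> exact h
  cases hS with
  | ground hg =>
    ext x
    simp only [Set.mem_setOf_eq]
    constructor
    · rintro ⟨L, ⟨hL, _⟩, hx⟩; exact ⟨L, hL, hx⟩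
    · intro hx; rw [Clause.ground] at hg; rw [hg] at hx; cases hx
  | negCompound hng hL hpos hcomp =>
    have hv := vars_eq_of_hasCompound hcov hL hcomp
    ext x
    simp only [Set.mem_setOf_eq, Set.mem_singleton_iff]
    constructor
    · rintro ⟨L', rfl, hx⟩
      exact hv ▸ hx
    · intro hx
      exact ⟨_, rfl, hv.symm ▸ hx⟩
  | posCompound hng hnn hcc =>
    ext x
    simp only [Set.mem_setOf_eq]
    constructor
    · rintro ⟨L, ⟨hL, _⟩, hx⟩; exact ⟨L, hL, hx⟩
    · intro hx
      obtain ⟨L, hL, hmax, hxL⟩ := max_core C x hx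
      exact ⟨L, ⟨hL, hmax⟩, hxL⟩
  | guard hng hnc hguard =>
    obtain ⟨hL, _, _, hvars⟩ := hguard
    ext x
    simp only [Set.mem_setOf_eq, Set.mem_singleton_iff]
    constructor
    · rintro ⟨L', rfl, hx⟩; exact hvars ▸ hx
    · intro hx; exact ⟨_, rfl, hvars.symm ▸ hx⟩
  | top σ' hng hnc =>
    ext y
    simp only [Set.mem_setOf_eq]
    constructor
    · rintro ⟨L, ⟨hL, _, _⟩, hy⟩; exact ⟨L, hL, hy⟩
    · intro hy
      set lv := ((C.filter fun L => L.pos == false).flatMap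
        (fun L => L.atom.args.flatMap Term.varList)) with hlv
      have hyl : y ∈ lv := mem_negVarList.mpr (neg_cover1 hC hng y hy)
      have hne : lv ≠ [] := fun h => by rw [h] at hyl; cases hyl
      obtain ⟨xm, hxm, hxmax⟩ := exists_max_image (fun v => (σ' v).depth) lv hne
      have htop : TopVarOfClause C σ' xm := by
        refine ⟨mem_negVarList.mp hxm, ?_⟩
        intro y' hy'
        exact hxmax y' (mem_negVarList.mpr hy')
      by_cases hdep : (σ' xm).depth ≤ (σ' y).depth
      · have htopy : TopVarOfClause C σ' y := by
          refine ⟨neg_cover1 hC hng y hy, ?_⟩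
          intro y' hy'
          exact le_trans (hxmax y' (mem_negVarList.mpr hy')) hdep
        obtain ⟨L, hL, hp, hv⟩ := neg_cover1 hC hng y hy
        exact ⟨L, ⟨hL, hp, y, htopy, hv⟩, hv⟩
      · have hxyne : xm ≠ y := fun h => hdep (h ▸ le_refl _)
        have hxmC : xm ∈ Clause.vars C := by
          obtain ⟨L, hL, hp, hv⟩ := mem_negVarList.mp hxm
          exact ⟨L, hL, hv⟩
        obtain ⟨L, hL, hp, hxv, hyv⟩ := neg_cover2 hC hng xm y hxmC hy hxyne
        exact ⟨L, ⟨hL, hp, xm, htop, hxv⟩, hyv⟩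
  | allNeg hng hnc =>
    ext y
    simp only [Set.mem_setOf_eq]
    constructor
    · rintro ⟨L, ⟨hL, _⟩, hy⟩; exact ⟨L, hL, hy⟩
    · intro hy
      obtain ⟨L, hL, hp, hv⟩ := neg_cover1 hC hng y hy
      exact ⟨L, ⟨hL, hp⟩, hv⟩
end QGF
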